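/- Let f be a relation on (X,d). If z satisfies m_d^f(z,z) = 0, then for all x,y ∈ X, m_d^f(x,y) ≤ max(m_d^f(x,z), m_d^f(z,y)). Consequently, the symmetrized function sm_d^f(x,y) = max(m_d^f(x,y), m_d^f(y,x)) restricted to |𝒞_d f| = {z : m_d^f(z,z)=0} is a pseudo-ultrametric. -/

import Mathlib

namespace ChainRec

variable {X : Type*}

/-- chain-length of a chain, with `x` the start point and `y` the end point.
For `c = [(a₁,b₁),…,(aₙ,bₙ)]` this is `d x a₁ + Σ d bᵢ a_{i+1} + d bₙ y`. -/
noncomputable def chainLen (d : X → X → ℝ) : X → X → List (X × X) → ℝ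
  | x, y, [] => d x y
  | x, y, p :: t => d x p.1 + chainLen d p.2 y t

/-- chain-bound of a chain: the max of all the gap distances. -/
noncomputable def chainBound (d : X → X → ℝ) : X → X → List (X × X) → ℝ
  | x, y, [] => d x y
  | x, y, p :: t => max (d x p.1) (chainBound d p.2 y t)

/-- The Aubry–Mather barrier function `ℓ_d^f`. -/
noncomputable def ell (d : X → X → ℝ) (f : Set (X × X)) (x y : X) : ℝ :=
  sInf { r | ∃ c : List (X × X), c ≠ [] ∧ (∀ p ∈ c, p ∈ f) ∧ r = chainLen d x y c }

/-- The Conley barrier function `m_d^f`. -/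
noncomputable def mbar (d : X → X → ℝ) (f : Set (X × X)) (x y : X) : ℝ :=
  sInf { r | ∃ c : List (X × X), c ≠ [] ∧ (∀ p ∈ c, p ∈ f) ∧ r = chainBound d x y c }

lemma chainBound_nonneg {d : X → X → ℝ} (dnn : ∀ x y, 0 ≤ d x y) :
    ∀ (c : List (X × X)) (x y : X), 0 ≤ chainBound d x y c
  | [], x, y => dnn x y
  | p :: _, x, _ => le_trans (dnn x p.1) (le_max_left _ _)

lemma chainBound_concat {d : X → X → ℝ} (dnn : ∀ x y, 0 ≤ d x y)
    (htri : ∀ x y z, d x z ≤ d x y + d y z) (y z : X) :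
    ∀ (c1 : List (X × X)) (x : X) (q : X × X) (t : List (X × X)),
      chainBound d x y (c1 ++ q :: t) ≤
        max (chainBound d x z c1 + d z q.1) (chainBound d z y (q :: t))
  | [], x, q, t => by
      simp only [List.nil_append, chainBound]
      apply max_le
      · exact le_max_of_le_left (htri x z q.1)
      · exact le_max_of_le_right (le_max_right _ _)
  | p :: t1, x, q, t => by
      simp only [List.cons_append, chainBound]
      apply max_le
      · apply le_max_of_le_left
        calc d x p.1 ≤ max (d x p.1) (chainBound d p.2 z t1) := le_max_left _ _
          _ ≤ _ + d z q.1 := le_add_of_nonneg_right (dnn z q.1)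
      · refine (chainBound_concat dnn htri y z t1 p.2 q t).trans (max_le_max ?_ le_rfl)
        exact add_le_add (le_max_right _ _) le_rfl

theorem smbar_ultrametric [Nonempty X] (d : X → X → ℝ) (f : Set (X × X))
    (hrefl : ∀ x, d x x = 0) (hsymm : ∀ x y, d x y = d y x)
    (htri : ∀ x y z, d x z ≤ d x y + d y z)
    (hbdd : ∃ C, ∀ x y, d x y ≤ C)
    :
    (∀ x y z, mbar d f z z = 0 → mbar d f x y ≤ max (mbar d f x z) (mbar d f z y)) ∧
    (∀ x, mbar d f x x = 0 → max (mbar d f x x) (mbar d f x x) = 0) ∧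
    (∀ x y, max (mbar d f x y) (mbar d f y x) = max (mbar d f y x) (mbar d f x y)) ∧
    (∀ x y z, mbar d f x x = 0 → mbar d f y y = 0 → mbar d f z z = 0 →
      max (mbar d f x y) (mbar d f y x) ≤
        max (max (mbar d f x z) (mbar d f z x)) (max (mbar d f z y) (mbar d f y z))) := by
  have dnn : ∀ x y, 0 ≤ d x y := by
    intro x y
    have h := htri x x y  -- d x y ≤ d x x + d x y ... not useful; use:
    have h2 : d x x ≤ d x y + d y x := htri x y x
    rw [hrefl, hsymm y x] at h2
    linarith
  have hbelow : ∀ x y, ∀ r ∈ { r | ∃ c : List (X × X), c ≠ [] ∧ (∀ p ∈ c, p ∈ f) ∧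
      r = chainBound d x y c }, (0:ℝ) ≤ r := by
    rintro x y r ⟨c, -, -, rfl⟩
    exact chainBound_nonneg dnn c x y
  have hbb : ∀ x y, BddBelow { r | ∃ c : List (X × X), c ≠ [] ∧ (∀ p ∈ c, p ∈ f) ∧
      r = chainBound d x y c } := fun x y => ⟨0, hbelow x y⟩
  have mnn : ∀ x y, 0 ≤ mbar d f x y := fun x y => Real.sInf_nonneg (hbelow x y)
  have hkey : ∀ x y z, mbar d f z z = 0 → mbar d f x y ≤ max (mbar d f x z) (mbar d f z y) := by
    intro x y z hz
    rcases f.eq_empty_or_nonempty with hf | ⟨p0, hp0⟩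
    · have : ∀ a b : X, mbar d f a b = 0 := by
        intro a b
        have : { r | ∃ c : List (X × X), c ≠ [] ∧ (∀ p ∈ c, p ∈ f) ∧
            r = chainBound d a b c } = ∅ := by
          ext r
          simp only [Set.mem_setOf_eq, Set.mem_empty_iff_false, iff_false]
          rintro ⟨c, hc, hcf, -⟩
          rcases List.exists_cons_of_ne_nil hc with ⟨q, t, rfl⟩
          exact absurd (hcf q List.mem_cons_self) (by simp [hf])
        rw [mbar, this, Real.sInf_empty]
      simp [this]
    · -- f nonempty: each chain set is nonempty
      have hne : ∀ a b : X, Set.Nonempty { r | ∃ c : List (X × X), c ≠ [] ∧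
          (∀ p ∈ c, p ∈ f) ∧ r = chainBound d a b c } := by
        intro a b
        exact ⟨chainBound d a b [p0], [p0], by simp, by simpa using hp0, rfl⟩
      refine le_of_forall_pos_le_add ?_
      intro ε hε
      have hhalf : (0:ℝ) < ε / 2 := by linarith
      obtain ⟨r1, ⟨c1, hc1ne, hc1f, rfl⟩, hr1⟩ :=
        exists_lt_of_csInf_lt (hne x z) (lt_add_of_pos_right (mbar d f x z) hhalf)
      obtain ⟨rz, ⟨cz, hczne, hczf, rfl⟩, hrz⟩ :=
        exists_lt_of_csInf_lt (hne z z) (show mbar d f z z < ε / 2 by rw [hz]; exact hhalf)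
      obtain ⟨r2, ⟨c2, hc2ne, hc2f, rfl⟩, hr2⟩ :=
        exists_lt_of_csInf_lt (hne z y) (lt_add_of_pos_right (mbar d f z y) hhalf)
      rcases List.exists_cons_of_ne_nil hczne with ⟨q, tz, rfl⟩
      rcases List.exists_cons_of_ne_nil hc2ne with ⟨q2, t2, rfl⟩
      -- the concatenated chain
      have hmem : chainBound d x y (c1 ++ (q :: tz ++ q2 :: t2)) ∈
          { r | ∃ c : List (X × X), c ≠ [] ∧ (∀ p ∈ c, p ∈ f) ∧
            r = chainBound d x y c } := by
        refine ⟨_, by simp, ?_, rfl⟩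
        intro p hp
        simp only [List.mem_append, List.mem_cons] at hp
        rcases hp with h | h
        · exact hc1f p h
        · rcases h with (h | h) | h
          · exact hczf p (by simp [h])
          · exact hczf p (by simp [h])
          · rcases h with h | h
            · exact hc2f p (by simp [h])
            · exact hc2f p (by simp [h])
      have hle := csInf_le (hbb x y) hmem
      set B1 := chainBound d x z c1
      set Bz := chainBound d z z (q :: tz)
      set B2 := chainBound d z y (q2 :: t2)
      have hB1 : B1 < mbar d f x z + ε / 2 := hr1
      have hBz : Bz < ε / 2 := hrz
      have hB2 : B2 < mbar d f z y + ε / 2 := hr2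
      -- estimate the chain bound
      have e1 : chainBound d x y (c1 ++ (q :: tz ++ q2 :: t2)) ≤
          max (B1 + d z q.1) (chainBound d z y (q :: tz ++ q2 :: t2)) := by
        have := chainBound_concat dnn htri y z c1 x q (tz ++ q2 :: t2)
        simpa using this
      have e2 : chainBound d z y (q :: tz ++ q2 :: t2) ≤
          max (Bz + d z q2.1) B2 := by
        have := chainBound_concat dnn htri y z (q :: tz) z q2 t2
        simpa using this
      have hdq : d z q.1 ≤ Bz := le_max_left _ _
      have hdq2 : d z q2.1 ≤ B2 := le_max_left _ _
      have hBznn : 0 ≤ Bz := chainBound_nonneg dnn _ _ _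
      have e3 : chainBound d z y (q :: tz ++ q2 :: t2) ≤ Bz + B2 := by
        refine e2.trans (max_le (by linarith) (by linarith))
      have total : chainBound d x y (c1 ++ (q :: tz ++ q2 :: t2)) ≤
          max (B1 + Bz) (Bz + B2) :=
        e1.trans (max_le_max (by linarith) e3)
      have : mbar d f x y ≤ max (B1 + Bz) (Bz + B2) := hle.trans total
      refine this.trans ?_
      apply max_le
      · have := le_max_left (mbar d f x z) (mbar d f z y); linarith
      · have := le_max_right (mbar d f x z) (mbar d f z y); linarith
  refine ⟨hkey, ?_, ?_, ?_⟩
  · intro x h; rw [h]; simp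
  · intro x y; exact max_comm _ _
  · intro x y z _ _ hz
    apply max_le
    · exact (hkey x y z hz).trans (max_le_max (le_max_left _ _) (le_max_left _ _))
    · refine (hkey y x z hz).trans ?_
      exact max_le (le_max_of_le_right (le_max_right _ _))
        (le_max_of_le_left (le_max_right _ _))

end ChainRec
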